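/- Let M = ⟨S, A, P, R, γ⟩ be a finite MDP with γ ∈ [0,1), let 1 < C < 2, and let π₀ be a policy with full support (π₀(a|s) > 0 for all s ∈ S, a ∈ A). Let (μₙ)ₙ≥0 be probability distributions on S with μₙ(s) > 0 for all s, and let (πₙ)ₙ≥0 be a sequence of policies such that for every n, π_{n+1} ∈ N^C(πₙ) and Σ_s μₙ(s) Σ_a π_{n+1}(a|s) A^{πₙ}(s,a) ≥ Σ_s μₙ(s) Σ_a π'(a|s) A^{πₙ}(s,a) for every policy π' ∈ N^C(πₙ). Then the value functions improve monotonically: V^{π_{n+1}}(s) ≥ V^{πₙ}(s) for every n ≥ 0 and every s ∈ S. -/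

import Mathlib

open Finset

variable {S A : Type*} [Fintype S] [Fintype A]

/-- A (stationary, stochastic) policy: for every state, a probability
distribution over actions. -/
def IsPolicy (π : S → A → ℝ) : Prop :=
  ∀ s, (∀ a, 0 ≤ π s a) ∧ (∑ a, π s a) = 1

/-- The neighborhood `N^C(π)`: policies `π'` with the same supports as `π`
whose importance ratios lie in `[2 - C, C]`. -/
def InNbhd (C : ℝ) (π π' : S → A → ℝ) : Prop :=
  IsPolicy π' ∧ (∀ s a, (0 < π s a ↔ 0 < π' s a)) ∧
    ∀ s a, 0 < π s a → (2 - C ≤ π' s a / π s a ∧ π' s a / π s a ≤ C)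

/-- monotonic policy improvement for updates constrained to the
neighborhood `N^C`. -/
theorem policy_improvement_monotone
    [Nonempty S] [Nonempty A]
    (P : S → A → S → ℝ)
    (hP : ∀ s a, (∀ s', 0 ≤ P s a s') ∧ (∑ s', P s a s') = 1)
    (R : S → A → ℝ) (γ : ℝ) (hγ : 0 ≤ γ ∧ γ < 1)
    (C : ℝ) (hC : 1 < C ∧ C < 2)
    (π : ℕ → S → A → ℝ)
    (hπ0 : IsPolicy (π 0)) (hfull : ∀ s a, 0 < π 0 s a)
    (μ : ℕ → S → ℝ)
    (hμ : ∀ n, (∀ s, 0 < μ n s) ∧ (∑ s, μ n s) = 1)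
    (V : ℕ → S → ℝ)
    (hV : ∀ n s, V n s = ∑ a, π n s a * (R s a + γ * ∑ s', P s a s' * V n s'))
    (hnb : ∀ n, InNbhd C (π n) (π (n + 1)))
    (hopt : ∀ n (π' : S → A → ℝ), InNbhd C (π n) π' →
      (∑ s, μ n s * ∑ a, π' s a * (R s a + γ * (∑ s', P s a s' * V n s') - V n s)) ≤
      (∑ s, μ n s * ∑ a, π (n + 1) s a * (R s a + γ * (∑ s', P s a s' * V n s') - V n s))) :
    ∀ n s, V n s ≤ V (n + 1) s := by
  classical
  have hpol : ∀ n, IsPolicy (π n) := by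
    intro n
    induction n with
    | zero => exact hπ0
    | succ k _ => exact (hnb k).1
  -- zero expected advantage of π n against itself
  have hzero : ∀ n s,
      ∑ a, π n s a * (R s a + γ * (∑ s', P s a s' * V n s') - V n s) = 0 := by
    intro n s
    have h2 := (hpol n s).2
    have e : ∑ a, π n s a * (R s a + γ * (∑ s', P s a s' * V n s') - V n s)
        = (∑ a, π n s a * (R s a + γ * ∑ s', P s a s' * V n s'))
          - (∑ a, π n s a) * V n s := by
      rw [Finset.sum_mul, ← Finset.sum_sub_distrib]
      exact Finset.sum_congr rfl fun a _ => by ring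
    rw [e, ← hV n s, h2, one_mul, sub_self]
  -- per-state expected advantage of π (n+1) is nonnegative
  have hadv : ∀ n s,
      0 ≤ ∑ a, π (n+1) s a * (R s a + γ * (∑ s', P s a s' * V n s') - V n s) := by
    intro n s
    by_contra hneg
    push_neg at hneg
    set π' : S → A → ℝ := fun t => if t = s then π n t else π (n+1) t with hπ'
    have hmem : InNbhd C (π n) π' := by
      refine ⟨?_, ?_, ?_⟩
      · intro t
        by_cases ht : t = s
        · simpa [hπ', ht] using hpol n s
        · simpa [hπ', ht] using (hnb n).1 t
      · intro t a
        by_cases ht : t = s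
        · simp [hπ', ht]
        · simpa [hπ', ht] using (hnb n).2.1 t a
      · intro t a hta
        by_cases ht : t = s
        · have : π' t a / π n t a = 1 := by
            simp [hπ', ht]
            exact (by subst ht; exact ne_of_gt hta)
          rw [this]
          constructor <;> linarith [hC.1]
        · simpa [hπ', ht] using (hnb n).2.2 t a hta
    have hle := hopt n π' hmem
    have heq : ∀ t ∈ Finset.univ.erase s,
        μ n t * ∑ a, π' t a * (R t a + γ * (∑ s', P t a s' * V n s') - V n t)
        = μ n t * ∑ a, π (n+1) t a * (R t a + γ * (∑ s', P t a s' * V n s') - V n t) := by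
      intro t ht
      have : t ≠ s := Finset.ne_of_mem_erase ht
      simp [hπ', this]
    rw [← Finset.sum_erase_add _ _ (Finset.mem_univ s),
        ← Finset.sum_erase_add _
          (fun t => μ n t * ∑ a, π (n+1) t a * (R t a + γ * (∑ s', P t a s' * V n s') - V n t))
          (Finset.mem_univ s),
        Finset.sum_congr rfl heq, add_le_add_iff_left] at hle
    have hs0 : ∑ a, π' s a * (R s a + γ * (∑ s', P s a s' * V n s') - V n s) = 0 := by
      simpa [hπ'] using hzero n s
    rw [hs0, mul_zero] at hle
    have := mul_neg_of_pos_of_neg ((hμ n).1 s) hneg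
    linarith
  -- main argument
  intro n
  set D : S → ℝ := fun s => V (n+1) s - V n s with hD
  have hrec : ∀ s, D s
      = (∑ a, π (n+1) s a * (R s a + γ * (∑ s', P s a s' * V n s') - V n s))
        + γ * ∑ a, π (n+1) s a * ∑ s', P s a s' * D s' := by
    intro s
    have e1 : ∀ a : A, ∑ s', P s a s' * D s'
        = (∑ s', P s a s' * V (n+1) s') - ∑ s', P s a s' * V n s' := by
      intro a
      rw [← Finset.sum_sub_distrib]
      exact Finset.sum_congr rfl fun s' _ => by simp [hD]; ring
    have e2 : (∑ a, π (n+1) s a * (R s a + γ * (∑ s', P s a s' * V n s') - V n s))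
        + γ * ∑ a, π (n+1) s a * ∑ s', P s a s' * D s'
        = (∑ a, π (n+1) s a * (R s a + γ * ∑ s', P s a s' * V (n+1) s'))
          - (∑ a, π (n+1) s a) * V n s := by
      rw [Finset.mul_sum, ← Finset.sum_add_distrib, Finset.sum_mul, ← Finset.sum_sub_distrib]
      refine Finset.sum_congr rfl fun a _ => ?_
      rw [e1 a]; ring
    rw [e2, ← hV (n+1) s, (hpol (n+1) s).2, one_mul]
  obtain ⟨s₀, -, hmin⟩ :=
    Finset.exists_min_image Finset.univ D ⟨Classical.arbitrary S, Finset.mem_univ _⟩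
  have hkey : γ * D s₀ ≤ D s₀ := by
    have h1 : ∀ a : A, D s₀ ≤ ∑ s', P s₀ a s' * D s' := by
      intro a
      calc D s₀ = ∑ s', P s₀ a s' * D s₀ := by
            rw [← Finset.sum_mul, (hP s₀ a).2, one_mul]
        _ ≤ ∑ s', P s₀ a s' * D s' :=
            Finset.sum_le_sum fun s' _ =>
              mul_le_mul_of_nonneg_left (hmin s' (Finset.mem_univ s')) ((hP s₀ a).1 s')
    have h2 : D s₀ ≤ ∑ a, π (n+1) s₀ a * ∑ s', P s₀ a s' * D s' := by
      calc D s₀ = ∑ a, π (n+1) s₀ a * D s₀ := by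
            rw [← Finset.sum_mul, (hpol (n+1) s₀).2, one_mul]
        _ ≤ _ := Finset.sum_le_sum fun a _ =>
            mul_le_mul_of_nonneg_left (h1 a) ((hpol (n+1) s₀).1 a)
    have h3 := hadv n s₀
    have h4 := hrec s₀
    nlinarith [mul_le_mul_of_nonneg_left h2 hγ.1]
  have hpos : 0 ≤ D s₀ := by nlinarith [hγ.2]
  intro s
  have := hmin s (Finset.mem_univ s)
  have : 0 ≤ D s := le_trans hpos this
  simpa [hD] using this
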